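/- Let G be a finite simple graph, s a vertex of G, and let v_1, v_2 be two vertices of G with N(v_2) ⊆ N[v_1]. Let S be a valid strategy for the firefighting process on (G, s) that defends v_2 at time step i, and suppose v_1 is not defended by S and is not burned at the start of time step i (that is, v_1 ∉ B_{i−1}). Let S′ be the sequence obtained from S by replacing v_2 with v_1 at time step i. Then S′ is a valid strategy and sav(S) ≤ sav(S′). -/

import Mathlib

open SimpleGraph

variable {V : Type*}

/-- The set of vertices burned by the end of time step `i` (0-indexed: `burnt G s S i` is `B_i`),
when a fire starts at `s` and the firefighter defends the vertices of the list `S` in order. -/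
def burnt (G : SimpleGraph V) (s : V) (S : List V) : ℕ → Set V
  | 0 => {s}
  | i + 1 => burnt G s S i ∪
      {u | u ∉ S.take (i + 1) ∧ ∃ b ∈ burnt G s S i, G.Adj u b}

/-- The set of all vertices ever burned by the strategy `S`. -/
def BurntSet (G : SimpleGraph V) (s : V) (S : List V) : Set V := ⋃ i, burnt G s S i

/-- A strategy is a sequence of pairwise distinct vertices; it is valid if the vertex defended
at each step is not yet burning at the start of that step. -/
def ValidStrategy (G : SimpleGraph V) (s : V) (S : List V) : Prop :=
  S.Nodup ∧ ∀ (i : ℕ) (h : i < S.length), S.get ⟨i, h⟩ ∉ burnt G s S i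

/-- The number of vertices saved (i.e. not burned) by the strategy `S`. -/
noncomputable def sav (G : SimpleGraph V) (s : V) (S : List V) : ℕ := (BurntSet G s S)ᶜ.ncard

/-- A valid strategy is minimal if every proper subsequence of it which is itself a valid
strategy saves strictly fewer vertices. -/
def MinimalStrategy (G : SimpleGraph V) (s : V) (S : List V) : Prop :=
  ValidStrategy G s S ∧ ∀ S' : List V, S'.Sublist S → S' ≠ S → ValidStrategy G s S' →
    sav G s S' < sav G s S

/-- A strategy is optimal if it is minimal and saves the maximum number of vertices. -/
def OptimalStrategy (G : SimpleGraph V) (s : V) (S : List V) : Prop :=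
  MinimalStrategy G s S ∧ ∀ S' : List V, ValidStrategy G s S' → sav G s S' ≤ sav G s S

/-- A walk is an induced path if it is a path and the subgraph induced on its vertices has no
edges besides the edges of the path. -/
def IsInducedPath (G : SimpleGraph V) {a b : V} (p : G.Walk a b) : Prop :=
  p.IsPath ∧ ∀ x ∈ p.support, ∀ y ∈ p.support, G.Adj x y → p.toSubgraph.Adj x y

/-- `u` is reachable from `s` in the subgraph of `G` induced on the complement of `A`. -/
def ReachAvoiding (G : SimpleGraph V) (A : Set V) (s u : V) : Prop :=
  ∃ p : G.Walk s u, ∀ x ∈ p.support, x ∉ A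

lemma burnt_succ (G : SimpleGraph V) (s : V) (S : List V) (i : ℕ) :
    burnt G s S (i + 1) = burnt G s S i ∪
      {u | u ∉ S.take (i + 1) ∧ ∃ b ∈ burnt G s S i, G.Adj u b} := rfl

lemma burnt_mono (G : SimpleGraph V) (s : V) (S : List V) : Monotone (burnt G s S) :=
  monotone_nat_of_le_succ fun _ => Set.subset_union_left

lemma burnt_congr (G : SimpleGraph V) (s : V) {S T : List V} (j : ℕ)
    (h : ∀ k ≤ j, S.take k = T.take k) : burnt G s S j = burnt G s T j := by
  induction j with
  | zero => rfl
  | succ n ih =>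
    have h1 : burnt G s S n = burnt G s T n := ih fun k hk => h k (hk.trans n.le_succ)
    rw [burnt_succ, burnt_succ, h1, h (n + 1) le_rfl]

lemma burnt_set_of_le (G : SimpleGraph V) (s : V) (S : List V) (i : ℕ) (a : V) {j : ℕ}
    (hj : j ≤ i) : burnt G s (S.set i a) j = burnt G s S j :=
  burnt_congr G s j fun k hk => by
    rw [List.take_set, List.set_eq_of_length_le (le_trans (List.length_take_le _ _) (hk.trans hj))]

lemma not_burnt_forever (G : SimpleGraph V) (s : V) (S : List V) {w : V} {m : ℕ}
    (hm : w ∉ burnt G s S m) (hw : ∀ j, m ≤ j → w ∈ S.take (j + 1)) :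
    ∀ j, w ∉ burnt G s S j := by
  have key : ∀ k, w ∉ burnt G s S (m + k) := by
    intro k
    induction k with
    | zero => simpa using hm
    | succ n ih =>
      rw [Nat.add_succ, burnt_succ, Set.mem_union]
      rintro (h | h)
      · exact ih h
      · exact h.1 (hw _ (Nat.le_add_right m n))
  intro j
  rcases le_or_gt j m with h | h
  · exact fun hj => hm (burnt_mono G s S h hj)
  · have := key (j - m); rwa [Nat.add_sub_cancel' h.le] at this

lemma mem_take_self {l : List V} {i n : ℕ} (hi : i < l.length) (hin : i < n) :
    l[i] ∈ l.take n := by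
  have h : i < (l.take n).length := by simp [lt_min hin hi]
  have := List.getElem_take (xs := l) (j := n) (i := i) (h := h)
  rw [← this]
  exact List.getElem_mem h

lemma eq_of_mem_of_not_mem_set {l : List V} {i : ℕ} {a x : V} (hx : x ∈ l)
    (hx' : x ∉ l.set i a) : ∃ h : i < l.length, x = l[i] := by
  obtain ⟨j, hj, rfl⟩ := List.getElem_of_mem hx
  by_cases h : i = j
  · subst h; exact ⟨hj, rfl⟩
  · exfalso
    apply hx'
    have h2 : (l.set i a)[j]'(by simpa using hj) = l[j] := List.getElem_set_ne h _
    rw [← h2]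
    exact List.getElem_mem _

/-- If `N(v₂) ⊆ N[v₁]`, `S` is a valid strategy defending `v₂` at (0-indexed)
time step `i`, and `v₁` is not defended by `S` and not burning at the start of that step, then
the sequence obtained by replacing `v₂` with `v₁` at step `i` is a valid strategy saving at
least as many vertices. -/
theorem replace_defended_vertex {V : Type*} [Fintype V] (G : SimpleGraph V) (s : V)
    (v₁ v₂ : V) (hN : G.neighborSet v₂ ⊆ G.neighborSet v₁ ∪ {v₁})
    (S : List V) (hS : ValidStrategy G s S) (i : ℕ) (hi : i < S.length)
    (hdef : S.get ⟨i, hi⟩ = v₂) (hv₁S : v₁ ∉ S) (hv₁b : v₁ ∉ burnt G s S i) :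
    ValidStrategy G s (S.set i v₁) ∧ sav G s S ≤ sav G s (S.set i v₁) := by
  have hdef' : S[i] = v₂ := hdef
  -- v₂ is never burnt by S
  have hv₂S : ∀ j, v₂ ∉ burnt G s S j := by
    refine not_burnt_forever G s S (m := i) (by rw [← hdef']; exact hS.2 i hi) ?_
    intro j hj
    rw [← hdef']
    exact mem_take_self hi (Nat.lt_succ_of_le hj)
  -- v₁ is never burnt by S.set i v₁
  have hv₁mem : ∀ j, i ≤ j → v₁ ∈ (S.set i v₁).take (j + 1) := by
    intro j hj
    have hi' : i < (S.set i v₁).length := by simpa using hi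
    have h := mem_take_self (l := S.set i v₁) hi' (Nat.lt_succ_of_le hj)
    rwa [List.getElem_set_self hi'] at h
  have hv₁S' : ∀ j, v₁ ∉ burnt G s (S.set i v₁) j := by
    refine not_burnt_forever G s (S.set i v₁) (m := i) ?_ hv₁mem
    rw [burnt_set_of_le G s S i v₁ le_rfl]; exact hv₁b
  -- an element of a prefix of S missing from the corresponding prefix of S.set i v₁ is v₂
  have hmem_sub : ∀ (k : ℕ) (x : V), x ∈ S.take k → x ∉ (S.set i v₁).take k → x = v₂ := by
    intro k x hx hx'
    rw [List.take_set] at hx'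
    obtain ⟨h, rfl⟩ := eq_of_mem_of_not_mem_set hx hx'
    rw [List.getElem_take, hdef']
  -- main induction
  have main : ∀ j, burnt G s (S.set i v₁) j ⊆ burnt G s S j ∪ {v₂} ∧
      (v₂ ∈ burnt G s (S.set i v₁) j → v₁ ∈ burnt G s S j) := by
    intro j
    induction j with
    | zero =>
      refine ⟨fun x hx => Or.inl hx, fun h => absurd ?_ (hv₂S 0)⟩
      exact h
    | succ n ih =>
      obtain ⟨ih1, ih2⟩ := ih
      constructor
      · intro u hu
        rw [burnt_succ, Set.mem_union, Set.mem_setOf_eq] at hu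
        rcases hu with hu | ⟨hu1, b, hb, hadj⟩
        · rcases ih1 hu with h | h
          · exact Or.inl (Or.inl h)
          · exact Or.inr h
        · by_cases hu2 : u = v₂
          · exact Or.inr hu2
          have hunot : u ∉ S.take (n + 1) := fun h => hu2 (hmem_sub _ _ h hu1)
          rcases ih1 hb with hbS | hbv
          · exact Or.inl (Or.inr ⟨hunot, b, hbS, hadj⟩)
          · -- b = v₂
            have hbv : b = v₂ := hbv
            subst hbv
            have hni : i < n := by
              by_contra h
              exact hv₂S n (by rwa [burnt_set_of_le G s S i v₁ (by omega)] at hb)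
            have hu1' : u ≠ v₁ := by
              rintro rfl
              exact hu1 (hv₁mem n (by omega))
            have hadj1 : G.Adj u v₁ := by
              rcases hN (G.adj_symm hadj) with h | h
              · exact h.symm
              · exact absurd h hu1'
            exact Or.inl (Or.inr ⟨hunot, v₁, ih2 hb, hadj1⟩)
      · intro h
        rw [burnt_succ, Set.mem_union, Set.mem_setOf_eq] at h
        rcases h with h | ⟨h1, b, hb, hadj⟩
        · exact burnt_mono G s S n.le_succ (ih2 h)
        · have hb1 : b ≠ v₁ := by rintro rfl; exact hv₁S' n hb
          have hadjb : G.Adj v₁ b := by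
            rcases hN hadj with h | h
            · exact h
            · exact absurd h hb1
          have hbS : b ∈ burnt G s S n := by
            rcases ih1 hb with h | h
            · exact h
            · exact absurd h (by rintro rfl; exact G.irrefl hadj)
          have hv₁not : v₁ ∉ S.take (n + 1) := fun h => hv₁S (List.take_subset _ _ h)
          exact Or.inr ⟨hv₁not, b, hbS, hadjb⟩
  -- consequences for the total burnt sets
  have hA' : BurntSet G s (S.set i v₁) ⊆ BurntSet G s S ∪ {v₂} := by
    intro x hx
    obtain ⟨j, hj⟩ : ∃ j, x ∈ burnt G s (S.set i v₁) j := by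
      simpa [BurntSet, Set.mem_iUnion] using hx
    rcases (main j).1 hj with h | h
    · exact Or.inl (by simp only [BurntSet, Set.mem_iUnion]; exact ⟨j, h⟩)
    · exact Or.inr h
  have h2 : v₂ ∈ BurntSet G s (S.set i v₁) → v₁ ∈ BurntSet G s S := by
    intro h
    obtain ⟨j, hj⟩ : ∃ j, v₂ ∈ burnt G s (S.set i v₁) j := by
      simpa [BurntSet, Set.mem_iUnion] using h
    simp only [BurntSet, Set.mem_iUnion]
    exact ⟨j, (main j).2 hj⟩
  have hv₂A : v₂ ∉ BurntSet G s S := by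
    simp only [BurntSet, Set.mem_iUnion, not_exists]
    exact hv₂S
  have hv₁A' : v₁ ∉ BurntSet G s (S.set i v₁) := by
    simp only [BurntSet, Set.mem_iUnion, not_exists]
    exact hv₁S'
  constructor
  · -- validity
    constructor
    · -- Nodup
      have h1 : S = S.take i ++ S[i] :: S.drop (i + 1) := by
        conv_lhs => rw [← List.take_append_drop i S, List.drop_eq_getElem_cons hi]
      have h2' : S.set i v₁ = S.take i ++ v₁ :: S.drop (i + 1) := by
        rw [List.set_eq_take_append_cons_drop, if_pos hi]
      rw [h2', List.nodup_append]
      have hS1 := hS.1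
      rw [h1, List.nodup_append] at hS1
      obtain ⟨hnt, hnc, hdisj⟩ := hS1
      refine ⟨hnt, ?_, ?_⟩
      · rw [List.nodup_cons] at hnc ⊢
        exact ⟨fun h => hv₁S (List.drop_subset _ _ h), hnc.2⟩
      · intro x hx y hx' rfl
        rcases List.mem_cons.mp hx' with rfl | hx'
        · exact hv₁S (List.take_subset _ _ hx)
        · exact hdisj _ hx _ (List.mem_cons_of_mem _ hx') rfl
    · intro j hj
      have hj' : j < S.length := by simpa using hj
      rcases lt_trichotomy j i with h | rfl | h
      · have hg : (S.set i v₁).get ⟨j, hj⟩ = S[j] := List.getElem_set_ne (by omega) _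
        rw [hg, burnt_set_of_le G s S i v₁ h.le]
        exact hS.2 j hj'
      · have hg : (S.set j v₁).get ⟨j, hj⟩ = v₁ := List.getElem_set_self _
        rw [hg, burnt_set_of_le G s S j v₁ le_rfl]
        exact hv₁b
      · have hg : (S.set i v₁).get ⟨j, hj⟩ = S[j] := List.getElem_set_ne (by omega) _
        rw [hg]
        intro hmem
        rcases (main j).1 hmem with hm | hm
        · exact hS.2 j hj' hm
        · have hm : S[j] = v₂ := hm
          have : S[j] = S[i] := by rw [hm, hdef']
          have := hS.1.getElem_inj_iff.mp this
          omega
  · -- saving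
    rw [sav, sav]
    by_cases hc : v₂ ∈ BurntSet G s (S.set i v₁)
    · have hv₁A : v₁ ∈ BurntSet G s S := h2 hc
      have hsub : (BurntSet G s S)ᶜ \ {v₂} ∪ {v₁} ⊆ (BurntSet G s (S.set i v₁))ᶜ := by
        rintro x (⟨hx1, hx2⟩ | hx)
        · intro hx'
          rcases hA' hx' with h | h
          · exact hx1 h
          · exact hx2 h
        · rcases hx with rfl
          exact hv₁A'
      have e1 : ((BurntSet G s S)ᶜ \ {v₂}).ncard + 1 = (BurntSet G s S)ᶜ.ncard :=
        Set.ncard_diff_singleton_add_one (show v₂ ∈ (BurntSet G s S)ᶜ from hv₂A)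
          (Set.toFinite _)
      have e2 : ((BurntSet G s S)ᶜ \ {v₂} ∪ {v₁}).ncard =
          ((BurntSet G s S)ᶜ \ {v₂}).ncard + 1 := by
        rw [Set.union_singleton]
        exact Set.ncard_insert_of_notMem (by simp [hv₁A]) (Set.toFinite _)
      have e3 := Set.ncard_le_ncard hsub (Set.toFinite _)
      omega
    · have hsub : (BurntSet G s S)ᶜ ⊆ (BurntSet G s (S.set i v₁))ᶜ := by
        intro x hx hx'
        rcases hA' hx' with h | h
        · exact hx h
        · rcases h with rfl
          exact hc hx'
      exact Set.ncard_le_ncard hsub (Set.toFinite _)
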